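/- Conversely, in the k-clique reduction, if the maximum SSBM-fixed objective over choices of k shared singleton blocks equals 0, then the k vertices of G corresponding to the shared blocks form a clique in G; hence G contains a k-clique. -/
import Mathlib


/-- Log-likelihood contribution of an ordered pair of distinct singleton blocks in
the k-clique reduction (see the paper's NP-hardness proof). -/
noncomputable def cliquePairTerm (c : ℝ) (shared : Bool) : ℝ :=
  (c * Real.log (if shared then (c + 1) / 2 else c) +
    (1 - c) * Real.log (1 - (if shared then (c + 1) / 2 else c))) +
  (1 * Real.log (if shared then (c + 1) / 2 else 1) +
    0 * Real.log (1 - (if shared then (c + 1) / 2 else 1)))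


lemma term_one (b : Bool) : cliquePairTerm 1 b = 0 := by
  cases b <;> simp [cliquePairTerm]

lemma term_zero_false : cliquePairTerm 0 false = 0 := by
  simp [cliquePairTerm]

lemma term_zero_true : cliquePairTerm 0 true = 2 * Real.log (1/2) := by
  simp [cliquePairTerm]; rw [show (1:ℝ) - 2⁻¹ = 2⁻¹ by norm_num, Real.log_inv]; ring

lemma term_nonpos (c : ℝ) (b : Bool) (hc : c = 0 ∨ c = 1) : cliquePairTerm c b ≤ 0 := by
  rcases hc with h | h <;> subst h
  · cases b
    · simp [term_zero_false]
    · rw [term_zero_true]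
      have : Real.log (1/2) < 0 := Real.log_neg (by norm_num) (by norm_num)
      nlinarith
  · simp [term_one]

open Finset in
/-- The SSBM-fixed objective of the k-clique reduction with singleton blocks and
shared vertex set `W`. -/
noncomputable def cliqueReductionObj {V : Type*} [Fintype V] [DecidableEq V]
    (G : SimpleGraph V) [DecidableRel G.Adj] (W : Finset V) : ℝ :=
  ∑ p ∈ (Finset.univ : Finset V).offDiag,
    cliquePairTerm (if G.Adj p.1 p.2 then (1 : ℝ) else 0)
      (decide (p.1 ∈ W ∧ p.2 ∈ W))

/-- Conversely: if a choice of `k` shared singleton blocks achieves objective `0`,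
then the corresponding `k` vertices form a clique in `G`; hence `G` has a
`k`-clique. -/
theorem zero_objective_gives_clique {V : Type*} [Fintype V] [DecidableEq V]
    (G : SimpleGraph V) [DecidableRel G.Adj] (k : ℕ) (W : Finset V)
    (hcard : W.card = k) (hobj : cliqueReductionObj G W = 0) :
    G.IsNClique k W := by
  have key := (Finset.sum_eq_zero_iff_of_nonpos (fun p _ =>
    term_nonpos _ _ (by split <;> simp))).mp hobj
  constructor
  · intro x hx y hy hxy
    have hp : (x, y) ∈ (Finset.univ : Finset V).offDiag := by
      simp [Finset.mem_offDiag, hxy]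
    have h0 := key (x, y) hp
    by_contra hadj
    rw [if_neg hadj] at h0
    have : decide ((x, y).1 ∈ W ∧ (x, y).2 ∈ W) = true := by
      simp_all
    rw [this, term_zero_true] at h0
    have : Real.log (1/2) < 0 := Real.log_neg (by norm_num) (by norm_num)
    nlinarith
  · exact hcard
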